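/- Let m be a positive integer, G a graph, W = (T, (W_x | x ∈ V(T))) a tree decomposition of G with T rooted, and X a set of m vertices of T. Then Z = ⋃_{x ∈ LCA(T,X)} W_x is the union of at most 2m − 1 bags of W, and for every component C of G − Z, the set N_G(V(C)) is contained in the union of at most two bags of W. Moreover, if W is natural, then N_G(V(C)) intersects at most two components of G − V(C). -/

import Mathlib

open SimpleGraph

section Defs

variable {V : Type*} {ι : Type*} {α : Type*}

/-- `G` has no `K_t`-minor: there is no family of `t` pairwise disjoint nonempty connected
vertex sets with an edge of `G` between any two of them. -/
def CliqueMinorFree (G : SimpleGraph V) (t : ℕ) : Prop :=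
  ¬ ∃ B : Fin t → Set V,
      (∀ i, (G.induce (B i)).Connected) ∧
      (∀ i j, i ≠ j → Disjoint (B i) (B j)) ∧
      (∀ i j, i ≠ j → ∃ u ∈ B i, ∃ w ∈ B j, G.Adj u w)

/-- `(T, W)` is a tree decomposition of `G`. -/
structure IsTreeDecomp (G : SimpleGraph V) (T : SimpleGraph ι) (W : ι → Set V) : Prop where
  isTree : T.IsTree
  bagsConnected : ∀ u : V, (T.induce {x : ι | u ∈ W x}).Connected
  edgeInBag : ∀ ⦃u w : V⦄, G.Adj u w → ∃ x, u ∈ W x ∧ w ∈ W x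

/-- The tree decomposition with bags `W` has width at most `w`. -/
def TDWidthLE (W : ι → Set V) (w : ℕ) : Prop := ∀ x, (W x).ncard ≤ w + 1

/-- `φ` is a `p`-centered coloring of `G`: every nonempty connected subgraph on which `φ`
uses at most `p` colors has a vertex of unique color. -/
def IsCenteredColoring (p : ℕ) (G : SimpleGraph V) (φ : V → α) : Prop :=
  ∀ H : G.Subgraph, H.Connected →
    p < (φ '' H.verts).ncard ∨ ∃ u ∈ H.verts, ∀ w ∈ H.verts, w ≠ u → φ w ≠ φ u

/-- The `p`-centered chromatic number of `G`. -/
noncomputable def centeredChromaticNumber (p : ℕ) (G : SimpleGraph V) : ℕ :=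
  sInf {k | ∃ φ : V → Fin k, IsCenteredColoring p G φ}

/-- `φ` is a `p`-centered coloring of `(G, σ)`: on every nonempty connected subgraph either
more than `p` colors are used, or the `σ`-minimal vertex has a unique color. -/
def IsOrderedCenteredColoring (p : ℕ) (G : SimpleGraph V) (σ : V → ℕ) (φ : V → α) : Prop :=
  ∀ H : G.Subgraph, H.Connected →
    p < (φ '' H.verts).ncard ∨
      ∃ u ∈ H.verts, (∀ w ∈ H.verts, σ u ≤ σ w) ∧ ∀ w ∈ H.verts, w ≠ u → φ w ≠ φ u

/-- The `p`-centered chromatic number of `(G, σ)`. -/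
noncomputable def orderedCenteredChromaticNumber (p : ℕ) (G : SimpleGraph V) (σ : V → ℕ) : ℕ :=
  sInf {k | ∃ φ : V → Fin k, IsOrderedCenteredColoring p G σ φ}

/-- `σ` (an injection into `ℕ`, representing a linear ordering of the vertices) is an
elimination ordering of the tree decomposition with bags `W`. -/
def IsEliminationOrdering (W : ι → Set V) (σ : V → ℕ) : Prop :=
  Function.Injective σ ∧
    ∀ u : V, ∃ x : ι, ∀ w : V, (∃ z, u ∈ W z ∧ w ∈ W z) → σ w < σ u → w ∈ W x

/-- `Pa` is a partition of the vertex set into nonempty parts. -/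
def IsVertexPartition (Pa : Set (Set V)) : Prop :=
  (∀ P ∈ Pa, P.Nonempty) ∧ ∀ u : V, ∃! P, P ∈ Pa ∧ u ∈ P

/-- The quotient graph `G/Pa`. -/
def quotientGraph (G : SimpleGraph V) (Pa : Set (Set V)) : SimpleGraph Pa where
  Adj P Q := P ≠ Q ∧ ∃ u ∈ (P : Set V), ∃ w ∈ (Q : Set V), G.Adj u w
  symm := by
    constructor
    rintro P Q ⟨hPQ, u, hu, w, hw, hadj⟩
    exact ⟨hPQ.symm, w, hw, u, hu, hadj.symm⟩
  loopless := by constructor; rintro P ⟨h, -⟩; exact h rfl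

/-- The neighborhood of a set of vertices. -/
def nbhdSet (G : SimpleGraph V) (S : Set V) : Set V :=
  {w | w ∉ S ∧ ∃ u ∈ S, G.Adj u w}

/-- `C` is (the vertex set of) a connected component of `G - Z`. -/
def IsCompOfDel (G : SimpleGraph V) (Z C : Set V) : Prop :=
  Disjoint C Z ∧ (G.induce C).Connected ∧
    ∀ u ∈ C, ∀ w, G.Adj u w → w ∉ Z → w ∈ C

/-- The neighborhood of a set of vertices in a subgraph. -/
def subNbhdSet {G : SimpleGraph V} (G₀ : G.Subgraph) (S : Set V) : Set V :=
  {w | w ∉ S ∧ ∃ u ∈ S, G₀.Adj u w}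

/-- `C` is (the vertex set of) a connected component of `G₀ - Z`, for a subgraph `G₀`. -/
def IsCompOfSubDel {G : SimpleGraph V} (G₀ : G.Subgraph) (Z C : Set V) : Prop :=
  C ⊆ G₀.verts \ Z ∧ (G₀.induce C).Connected ∧
    ∀ u ∈ C, ∀ w ∈ G₀.verts \ Z, G₀.Adj u w → w ∈ C

/-- `φ` is a `(p,c)`-good coloring of `G`. -/
def IsGoodColoring (p c : ℕ) (G : SimpleGraph V) (φ : V → ℕ) : Prop :=
  ∀ G₀ : G.Subgraph, ∀ 𝓕 : Set G.Subgraph,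
    (∀ F ∈ 𝓕, F ≤ G₀ ∧ F.Connected) →
    ∀ d : ℕ, 0 < d →
      (¬ ∃ f : Fin (d + 1) → G.Subgraph,
          (∀ i, f i ∈ 𝓕) ∧ ∀ i j, i ≠ j → Disjoint (f i).verts (f j).verts) →
      ∃ Z : Set V, Z ⊆ G₀.verts ∧ ∃ ψ : V → ℕ,
        (∀ u ∈ Z, 1 ≤ ψ u ∧ ψ u ≤ c * d) ∧
        (∀ F ∈ 𝓕, (F.verts ∩ Z).Nonempty) ∧
        (∀ H : G.Subgraph, H ≤ G₀ → H.Connected → (H.verts ∩ Z).Nonempty →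
          p < (φ '' H.verts).ncard ∨
            ∃ u ∈ H.verts ∩ Z, ∀ w ∈ H.verts ∩ Z, w ≠ u → (φ w, ψ w) ≠ (φ u, ψ u)) ∧
        (∀ C : Set V, IsCompOfSubDel G₀ Z C →
          ∃ D₁ D₂ : Set V, ∀ D, IsCompOfSubDel G₀ C D →
            (subNbhdSet G₀ C ∩ D).Nonempty → D = D₁ ∨ D = D₂)

/-- Adjacency in the torso of `W` in `G`: two distinct vertices of `W` joined by a
walk of `G` all of whose internal vertices avoid `W`. -/
def TorsoAdj (G : SimpleGraph V) (W : Set V) (u w : V) : Prop :=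
  u ∈ W ∧ w ∈ W ∧ u ≠ w ∧
    ∃ q : G.Walk u w, ∀ x ∈ q.support, x ∈ W → x = u ∨ x = w

/-- The torso of `W` in `G`. -/
def torso (G : SimpleGraph V) (W : Set V) : SimpleGraph W where
  Adj u w := TorsoAdj G W ↑u ↑w
  symm := by
    constructor
    intro u w h
    obtain ⟨hu, hw, hne, q, hq⟩ := h
    exact ⟨hw, hu, hne.symm, q.reverse, fun x hx hxW => by
      rw [Walk.support_reverse, List.mem_reverse] at hx
      exact (hq x hx hxW).symm⟩
  loopless := by
    constructor
    intro u h
    exact h.2.2.1 rfl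

/-- In the tree `T` rooted at `r`, the vertex `u` is an ancestor of `w`
(i.e. `u` lies on every walk from the root to `w`). -/
def IsAncestor (T : SimpleGraph α) (r u w : α) : Prop :=
  ∀ q : T.Walk r w, u ∈ q.support

/-- `x` is the lowest common ancestor of `u` and `w` in the tree `T` rooted at `r`. -/
def IsLCA (T : SimpleGraph α) (r x u w : α) : Prop :=
  IsAncestor T r x u ∧ IsAncestor T r x w ∧
    ∀ y, IsAncestor T r y u → IsAncestor T r y w → IsAncestor T r y x

/-- The lowest common ancestor closure of `Y` in the tree `T` rooted at `r`. -/
def lcaClosure (T : SimpleGraph α) (r : α) (Y : Set α) : Set α :=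
  {x | ∃ u ∈ Y, ∃ w ∈ Y, IsLCA T r x u w}

/-- The vertex set of `T_{x|y}`: the component of `x` in `T` minus the edge `xy`.
(For adjacent `x y` in a tree these are the vertices `z` such that
the path from `z` to `y` passes through `x`.) -/
def sideVerts (T : SimpleGraph α) (x y : α) : Set α :=
  {z | ∀ q : T.Walk z y, x ∈ q.support}

/-- The tree decomposition `(T, W)` of `G` is natural. -/
def IsNaturalTD (G : SimpleGraph V) (T : SimpleGraph ι) (W : ι → Set V) : Prop :=
  ∀ x y, T.Adj x y → (G.induce (⋃ z ∈ sideVerts T x y, W z)).Connected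

end Defs

set_option linter.unusedSectionVars false
namespace StmtAux

variable {V : Type*} {ι : Type*} [DecidableEq ι] {T : SimpleGraph ι}

/-- The unique path between two vertices of a tree. -/
noncomputable def pa (hT : T.IsTree) (a b : ι) : T.Walk a b :=
  (hT.existsUnique_path a b).exists.choose

lemma pa_isPath (hT : T.IsTree) (a b : ι) : (pa hT a b).IsPath :=
  (hT.existsUnique_path a b).exists.choose_spec

lemma pa_unique (hT : T.IsTree) {a b : ι} {p : T.Walk a b} (hp : p.IsPath) :
    p = pa hT a b := by
  have h1 := (hT.existsUnique_path a b).unique hp (pa_isPath hT a b)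
  exact h1

lemma pa_support_subset (hT : T.IsTree) {a b : ι} (q : T.Walk a b) :
    (pa hT a b).support ⊆ q.support := by
  have h : (q.toPath : T.Walk a b) = pa hT a b := pa_unique hT q.toPath.2
  rw [← h]
  exact q.support_toPath_subset

lemma support_pa_self (hT : T.IsTree) (t : ι) : (pa hT t t).support = [t] := by
  have : (Walk.nil : T.Walk t t) = pa hT t t := pa_unique hT Walk.IsPath.nil
  rw [← this]; rfl

lemma isPath_append_of {a b c : ι} {p : T.Walk a b} {q : T.Walk b c}
    (hp : p.IsPath) (hq : q.IsPath) (h : ∀ x ∈ p.support, x ∈ q.support → x = b) :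
    (p.append q).IsPath := by
  rw [Walk.isPath_def, Walk.support_append, List.nodup_append]
  refine ⟨hp.support_nodup, ?_, ?_⟩
  · have := hq.support_nodup
    rw [q.support_eq_cons] at this
    exact this.of_cons
  · intro x hx x' hx' hxx'
    subst hxx'
    have hxq : x ∈ q.support := by rw [q.support_eq_cons]; exact List.mem_cons_of_mem _ hx'
    have hxb : x = b := h x hx hxq
    subst hxb
    have := hq.support_nodup
    rw [q.support_eq_cons] at this
    exact (List.nodup_cons.mp this).1 hx'

lemma pa_takeUntil (hT : T.IsTree) {ρ y x : ι} (h : x ∈ (pa hT ρ y).support) :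
    (pa hT ρ y).takeUntil x h = pa hT ρ x :=
  pa_unique hT ((pa_isPath hT ρ y).takeUntil h)

lemma takeUntil_inter {a b x y : ι} {p : T.Walk a b} (hp : p.IsPath) (h : x ∈ p.support)
    (hy1 : y ∈ (p.takeUntil x h).support) (hy2 : y ∈ (p.dropUntil x h).support) : y = x := by
  by_contra hne
  have hspec := p.take_spec h
  have hmem : p.support = (p.takeUntil x h).support ++ (p.dropUntil x h).support.tail := by
    conv_lhs => rw [← hspec]
    exact Walk.support_append _ _
  have hnodup := hp.support_nodup
  rw [hmem, List.nodup_append] at hnodup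
  have hy2' : y ∈ (p.dropUntil x h).support.tail := by
    have := (p.dropUntil x h).support_eq_cons
    rw [this] at hy2
    rcases List.mem_cons.mp hy2 with h' | h'
    · exact absurd h' hne
    · exact h'
  exact hnodup.2.2 y hy1 y hy2' rfl

/-- `x` is an ancestor of `y` in `T` rooted at `ρ`. -/
def anc (hT : T.IsTree) (ρ x y : ι) : Prop := x ∈ (pa hT ρ y).support

lemma anc_refl (hT : T.IsTree) (ρ x : ι) : anc hT ρ x x := Walk.end_mem_support _

lemma anc_root (hT : T.IsTree) (ρ x : ι) : anc hT ρ ρ x := Walk.start_mem_support _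

lemma anc_trans (hT : T.IsTree) {ρ x y z : ι} (h1 : anc hT ρ x y) (h2 : anc hT ρ y z) :
    anc hT ρ x z := by
  unfold anc at *
  rw [← pa_takeUntil hT h2] at h1
  exact Walk.support_takeUntil_subset _ _ h1

lemma anc_antisymm (hT : T.IsTree) {ρ x y : ι} (h1 : anc hT ρ x y) (h2 : anc hT ρ y x) :
    x = y := by
  unfold anc at *
  rw [← pa_takeUntil hT h1] at h2
  exact (takeUntil_inter (pa_isPath hT ρ y) h1 h2 (Walk.end_mem_support _)).symm

lemma mem_drop_anc (hT : T.IsTree) {ρ u x z : ι} (h : x ∈ (pa hT ρ u).support)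
    (hz : z ∈ ((pa hT ρ u).dropUntil x h).support) : anc hT ρ x z := by
  set p := pa hT ρ u with hp
  have hdp : ((p.dropUntil x h).takeUntil z hz).IsPath :=
    ((pa_isPath hT ρ u).dropUntil h).takeUntil hz
  have happ : ((p.takeUntil x h).append ((p.dropUntil x h).takeUntil z hz)).IsPath := by
    refine isPath_append_of ((pa_isPath hT ρ u).takeUntil h) hdp ?_
    intro w hw hw'
    exact takeUntil_inter (pa_isPath hT ρ u) h hw (Walk.support_takeUntil_subset _ _ hw')
  have := pa_unique hT happ
  unfold anc
  rw [← this, Walk.mem_support_append_iff]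
  left
  exact Walk.end_mem_support _

lemma anc_total (hT : T.IsTree) {ρ u y z : ι} (hy : anc hT ρ y u) (hz : anc hT ρ z u) :
    anc hT ρ y z ∨ anc hT ρ z y := by
  unfold anc at hy hz
  have hspec := (pa hT ρ u).take_spec hz
  have hmem : y ∈ ((pa hT ρ u).takeUntil z hz).support ∨
      y ∈ ((pa hT ρ u).dropUntil z hz).support := by
    have : y ∈ (((pa hT ρ u).takeUntil z hz).append ((pa hT ρ u).dropUntil z hz)).support := by
      rw [hspec]; exact hy
    rwa [Walk.mem_support_append_iff] at this
  rcases hmem with h | h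
  · left; unfold anc; rw [← pa_takeUntil hT hz]; exact h
  · right; exact mem_drop_anc hT hz h

lemma supp_union (hT : T.IsTree) {a b c z : ι} (hz : z ∈ (pa hT a c).support) :
    z ∈ (pa hT a b).support ∨ z ∈ (pa hT b c).support := by
  have := pa_support_subset hT ((pa hT a b).append (pa hT b c)) hz
  rwa [Walk.mem_support_append_iff] at this

lemma mem_pa_symm (hT : T.IsTree) {a b z : ι} (hz : z ∈ (pa hT a b).support) :
    z ∈ (pa hT b a).support := by
  have : (pa hT a b).reverse = pa hT b a := pa_unique hT (pa_isPath hT a b).reverse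
  rw [← this, Walk.support_reverse, List.mem_reverse]
  exact hz





/-- generic: a minimum of a chain within a list -/
lemma exists_rel_min {α : Type*} (P : α → Prop) (R : α → α → Prop)
    (htot : ∀ x y, P x → P y → R x y ∨ R y x)
    (htrans : ∀ x y z, P x → P y → P z → R x y → R y z → R x z) :
    ∀ l : List α, (∃ x ∈ l, P x) → ∃ b ∈ l, P b ∧ ∀ z ∈ l, P z → R b z := by
  intro l
  induction l with
  | nil => rintro ⟨x, hx, -⟩; exact absurd hx List.not_mem_nil
  | cons a l ih =>
    rintro ⟨x, hx, hPx⟩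
    by_cases hl : ∃ x ∈ l, P x
    · obtain ⟨b, hb, hPb, hmin⟩ := ih hl
      by_cases hPa : P a
      · rcases htot a b hPa hPb with hab | hba
        · refine ⟨a, List.mem_cons_self, hPa, ?_⟩
          intro z hz hPz
          rcases List.mem_cons.mp hz with rfl | hz'
          · rcases htot _ _ hPz hPz with h | h <;> exact h
          · exact htrans a b z hPa hPb hPz hab (hmin z hz' hPz)
        · refine ⟨b, List.mem_cons_of_mem a hb, hPb, ?_⟩
          intro z hz hPz
          rcases List.mem_cons.mp hz with rfl | hz'
          · exact hba
          · exact hmin z hz' hPz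
      · refine ⟨b, List.mem_cons_of_mem a hb, hPb, ?_⟩
        intro z hz hPz
        rcases List.mem_cons.mp hz with rfl | hz'
        · exact absurd hPz hPa
        · exact hmin z hz' hPz
    · have hxa : x = a := by
        rcases List.mem_cons.mp hx with rfl | hx'
        · rfl
        · exact absurd ⟨x, hx', hPx⟩ hl
      subst hxa
      refine ⟨x, List.mem_cons_self, hPx, ?_⟩
      intro z hz hPz
      rcases List.mem_cons.mp hz with rfl | hz'
      · rcases htot _ _ hPz hPz with h | h <;> exact h
      · exact absurd ⟨z, hz', hPz⟩ hl

lemma exists_lca (hT : T.IsTree) (r u w : ι) :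
    ∃ g, anc hT r g u ∧ anc hT r g w ∧ ∀ y, anc hT r y u → anc hT r y w → anc hT r y g := by
  obtain ⟨b, hbl, hPb, hmin⟩ := exists_rel_min
    (fun y => anc hT r y u ∧ anc hT r y w) (fun x y => anc hT r y x)
    (fun x y hx hy => anc_total hT hy.1 hx.1)
    (fun x y z _ _ _ h1 h2 => anc_trans hT h2 h1)
    (pa hT r u).support ⟨r, Walk.start_mem_support _, anc_root hT r u, anc_root hT r w⟩
  exact ⟨b, hPb.1, hPb.2, fun y h1 h2 => hmin y h1 ⟨h1, h2⟩⟩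

/-- The lowest common ancestor. -/
noncomputable def lcaF (hT : T.IsTree) (r u w : ι) : ι := (exists_lca hT r u w).choose

lemma lca_anc_left (hT : T.IsTree) (r u w : ι) : anc hT r (lcaF hT r u w) u :=
  (exists_lca hT r u w).choose_spec.1

lemma lca_anc_right (hT : T.IsTree) (r u w : ι) : anc hT r (lcaF hT r u w) w :=
  (exists_lca hT r u w).choose_spec.2.1

lemma lca_max (hT : T.IsTree) {r u w y : ι} (h1 : anc hT r y u) (h2 : anc hT r y w) :
    anc hT r y (lcaF hT r u w) :=
  (exists_lca hT r u w).choose_spec.2.2 y h1 h2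

lemma lcaF_eq_of (hT : T.IsTree) {r u w x : ι} (h1 : anc hT r x u) (h2 : anc hT r x w)
    (h3 : ∀ y, anc hT r y u → anc hT r y w → anc hT r y x) : x = lcaF hT r u w :=
  anc_antisymm hT (lca_max hT h1 h2) (h3 _ (lca_anc_left hT r u w) (lca_anc_right hT r u w))

lemma lcaF_comm (hT : T.IsTree) (r u w : ι) : lcaF hT r u w = lcaF hT r w u :=
  lcaF_eq_of hT (lca_anc_right hT r u w) (lca_anc_left hT r u w)
    (fun y h1 h2 => lca_max hT h2 h1)

lemma lcaF_self (hT : T.IsTree) (r u : ι) : lcaF hT r u u = u :=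
  (lcaF_eq_of hT (anc_refl hT r u) (anc_refl hT r u) (fun _ h1 _ => h1)).symm

lemma isAncestor_iff (hT : T.IsTree) (ρ x y : ι) : IsAncestor T ρ x y ↔ anc hT ρ x y := by
  constructor
  · intro h; exact h (pa hT ρ y)
  · intro h q; exact pa_support_subset hT q h

lemma isLCA_iff (hT : T.IsTree) (r x u w : ι) : IsLCA T r x u w ↔ x = lcaF hT r u w := by
  constructor
  · rintro ⟨h1, h2, h3⟩
    rw [isAncestor_iff hT] at h1 h2
    refine lcaF_eq_of hT h1 h2 ?_
    intro y hy1 hy2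
    rw [← isAncestor_iff hT] at hy1 hy2 ⊢
    exact h3 y hy1 hy2
  · rintro rfl
    refine ⟨?_, ?_, ?_⟩
    · rw [isAncestor_iff hT]; exact lca_anc_left hT r u w
    · rw [isAncestor_iff hT]; exact lca_anc_right hT r u w
    · intro y hy1 hy2
      rw [isAncestor_iff hT] at hy1 hy2 ⊢
      exact lca_max hT hy1 hy2

lemma lcaF_lcaF (hT : T.IsTree) (r a b c : ι) :
    lcaF hT r (lcaF hT r a b) c = lcaF hT r a c ∨ lcaF hT r (lcaF hT r a b) c = lcaF hT r a b := by
  set g := lcaF hT r a b with hg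
  set p := lcaF hT r a c with hp
  rcases anc_total hT (lca_anc_left hT r a c) (lca_anc_left hT r a b) with hpg | hgp
  · -- p anc g
    left
    refine (lcaF_eq_of hT hpg (lca_anc_right hT r a c) ?_).symm
    intro y hyg hyc
    exact lca_max hT (anc_trans hT hyg (lca_anc_left hT r a b)) hyc
  · -- g anc p
    right
    have hgc : anc hT r g c := anc_trans hT hgp (lca_anc_right hT r a c)
    exact (lcaF_eq_of hT (anc_refl hT r g) hgc (fun y hy _ => hy)).symm

lemma lca_mem_path (hT : T.IsTree) (r u w : ι) :
    lcaF hT r u w ∈ (pa hT u w).support := by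
  set g := lcaF hT r u w with hg
  have hgu : g ∈ (pa hT r u).support := lca_anc_left hT r u w
  have hgw : g ∈ (pa hT r w).support := lca_anc_right hT r u w
  set d1 := (pa hT r u).dropUntil g hgu with hd1
  set d2 := (pa hT r w).dropUntil g hgw with hd2
  have hd1p : d1.IsPath := (pa_isPath hT r u).dropUntil hgu
  have hd2p : d2.IsPath := (pa_isPath hT r w).dropUntil hgw
  have hinter : ∀ z ∈ d1.support, z ∈ d2.support → z = g := by
    intro z hz1 hz2
    have h1 : anc hT r g z := mem_drop_anc hT hgu hz1
    have h2 : anc hT r z u := Walk.support_dropUntil_subset _ _ hz1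
    have h3 : anc hT r z w := Walk.support_dropUntil_subset _ _ hz2
    rw [hg]
    exact anc_antisymm hT (lca_max hT h2 h3) h1
  have hrev : (d1.reverse.append d2).IsPath := by
    refine isPath_append_of hd1p.reverse hd2p ?_
    intro x hx hx'
    rw [Walk.support_reverse, List.mem_reverse] at hx
    exact hinter x hx hx'
  have := pa_unique hT hrev
  rw [← this, Walk.mem_support_append_iff]
  left
  rw [Walk.support_reverse, List.mem_reverse]
  exact Walk.start_mem_support _

lemma adj_anc_or (hT : T.IsTree) (r : ι) {x y : ι} (h : T.Adj x y) :
    anc hT r x y ∨ anc hT r y x := by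
  by_cases hx : x ∈ (pa hT r y).support
  · left; exact hx
  · right
    have hpath : ((pa hT r y).append (Walk.cons h.symm Walk.nil)).IsPath := by
      refine isPath_append_of (pa_isPath hT r y) ?_ ?_
      · rw [Walk.cons_isPath_iff]
        exact ⟨Walk.IsPath.nil, by simp [h.ne']⟩
      · intro z hz hz'
        have : z = y ∨ z = x := by simpa using hz'
        rcases this with rfl | rfl
        · rfl
        · exact absurd hz hx
    have := pa_unique hT hpath
    unfold anc
    rw [← this, Walk.mem_support_append_iff]
    left; exact Walk.end_mem_support _

lemma anc_adj_step (hT : T.IsTree) (r : ι) {k t : ι} (hadj : T.Adj k t) (hanc : anc hT r k t) :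
    ∀ z, anc hT r z t → z = t ∨ anc hT r z k := by
  intro z hz
  have hdrop : (pa hT r t).dropUntil k hanc = Walk.cons hadj Walk.nil := by
    symm
    have h1 : ((pa hT r t).dropUntil k hanc).IsPath := (pa_isPath hT r t).dropUntil hanc
    have h2 : (Walk.cons hadj (Walk.nil : T.Walk t t)).IsPath := by
      rw [Walk.cons_isPath_iff]; exact ⟨Walk.IsPath.nil, by simp [hadj.ne]⟩
    calc Walk.cons hadj Walk.nil = pa hT k t := pa_unique hT h2
      _ = (pa hT r t).dropUntil k hanc := (pa_unique hT h1).symm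
  have hspec := (pa hT r t).take_spec hanc
  have hmem : z ∈ ((pa hT r t).takeUntil k hanc).support ∨
      z ∈ ((pa hT r t).dropUntil k hanc).support := by
    have : z ∈ (((pa hT r t).takeUntil k hanc).append ((pa hT r t).dropUntil k hanc)).support := by
      rw [hspec]; exact hz
    rwa [Walk.mem_support_append_iff] at this
  rcases hmem with h | h
  · right
    unfold anc
    rw [← pa_takeUntil hT hanc]
    exact h
  · rw [hdrop] at h
    have : z = k ∨ z = t := by simpa using h
    rcases this with rfl | rfl
    · right; exact anc_refl hT r z
    · left; rfl

lemma parent_unique (hT : T.IsTree) (r : ι) {k k' t : ι} (h1 : T.Adj k t) (h2 : T.Adj k' t)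
    (ha1 : anc hT r k t) (ha2 : anc hT r k' t) : k = k' := by
  rcases anc_adj_step hT r h1 ha1 k' ha2 with rfl | h
  · exact absurd h2 (T.loopless.irrefl k').elim
  · rcases anc_adj_step hT r h2 ha2 k ha1 with rfl | h'
    · exact absurd h1 (T.loopless.irrefl k).elim
    · exact anc_antisymm hT h' h

lemma child_unique (hT : T.IsTree) {t k k' : ι} (h1 : T.Adj t k) (h2 : T.Adj t k')
    (hnot : t ∉ (pa hT k k').support) : k = k' := by
  by_contra hne
  have hpath : (Walk.cons h1.symm (Walk.cons h2 (Walk.nil : T.Walk k' k'))).IsPath := by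
    rw [Walk.cons_isPath_iff, Walk.cons_isPath_iff]
    refine ⟨⟨Walk.IsPath.nil, by simp [h2.ne]⟩, ?_⟩
    simp only [Walk.support_cons, Walk.support_nil, List.mem_cons, List.not_mem_nil, or_false]
    push_neg
    exact ⟨h1.ne', hne⟩
  have := pa_unique hT hpath
  apply hnot
  rw [← this]
  simp

lemma penult (hT : T.IsTree) {t b : ι} (hne : t ≠ b) :
    ∃ k, T.Adj k b ∧ (∀ z ∈ (pa hT t k).support, z ∈ (pa hT t b).support) ∧
      b ∉ (pa hT t k).support := by
  have hrevp : (pa hT t b).reverse.IsPath := (pa_isPath hT t b).reverse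
  rcases hq : (pa hT t b).reverse with _ | ⟨hadj, q⟩
  · exact absurd rfl hne.symm
  · rename_i k
    rw [hq] at hrevp
    rw [Walk.cons_isPath_iff] at hrevp
    have hqp : q.reverse.IsPath := hrevp.1.reverse
    have hqeq : q.reverse = pa hT t k := pa_unique hT hqp
    refine ⟨k, hadj.symm, ?_, ?_⟩
    · intro z hz
      rw [← hqeq, Walk.support_reverse, List.mem_reverse] at hz
      have : z ∈ (pa hT t b).reverse.support := by
        rw [hq, Walk.support_cons]
        exact List.mem_cons_of_mem _ hz
      rwa [Walk.support_reverse, List.mem_reverse] at this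
    · rw [← hqeq, Walk.support_reverse, List.mem_reverse]
      exact hrevp.2



section GraphAux
variable {V : Type*} [DecidableEq V] {G : SimpleGraph V}

lemma induce_walk_exists {s : Set V} :
    ∀ {u v : ↥s} (_ : (G.induce s).Walk u v), ∃ q : G.Walk u.1 v.1, ∀ x ∈ q.support, x ∈ s := by
  intro u v h
  induction h with
  | nil => exact ⟨Walk.nil, by rename_i u'; simpa using u'.2⟩
  | cons hadj p ih =>
    obtain ⟨q, hq⟩ := ih
    refine ⟨Walk.cons (show G.Adj _ _ by simpa using hadj) q, ?_⟩
    intro x hx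
    rw [Walk.support_cons] at hx
    rcases List.mem_cons.mp hx with rfl | hx'
    · rename_i u' _ _; exact u'.2
    · exact hq x hx'

lemma reachable_of_walk_in_set {s : Set V} :
    ∀ {u v : V} (q : G.Walk u v), (∀ x ∈ q.support, x ∈ s) →
      ∀ (hu : u ∈ s) (hv : v ∈ s), (G.induce s).Reachable ⟨u, hu⟩ ⟨v, hv⟩ := by
  intro u v q
  induction q with
  | nil => intro _ hu hv; rfl
  | cons hadj p ih =>
    rename_i a b c
    intro hsup hu hv
    have hb : b ∈ s := hsup b (by rw [Walk.support_cons]; exact List.mem_cons_of_mem _ p.start_mem_support)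
    have h1 : (G.induce s).Adj ⟨a, hu⟩ ⟨b, hb⟩ := by exact hadj
    exact h1.reachable.trans (ih (fun x hx => hsup x (by rw [Walk.support_cons]; exact List.mem_cons_of_mem _ hx)) hb hv)

lemma connected_walk_in_set {s : Set V} (hc : (G.induce s).Connected) {u v : V}
    (hu : u ∈ s) (hv : v ∈ s) : ∃ q : G.Walk u v, ∀ x ∈ q.support, x ∈ s := by
  have := hc.preconnected ⟨u, hu⟩ ⟨v, hv⟩
  exact this.elim fun p => induce_walk_exists p

lemma connected_set_nonempty {s : Set V} (hc : (G.induce s).Connected) : s.Nonempty := by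
  have := hc.nonempty
  exact ⟨this.some.1, this.some.2⟩

/-- The component of `G - C` containing `v`. -/
def compOf (G : SimpleGraph V) (C : Set V) (v : V) : Set V :=
  {x | ∃ q : G.Walk v x, ∀ y ∈ q.support, y ∉ C}

lemma mem_compOf_self {C : Set V} {v : V} (hv : v ∉ C) : v ∈ compOf G C v :=
  ⟨Walk.nil, by simpa using hv⟩

lemma compOf_isComp {C : Set V} {v : V} (hv : v ∉ C) : IsCompOfDel G C (compOf G C v) := by
  refine ⟨?_, ?_, ?_⟩
  · rw [Set.disjoint_left]
    rintro x ⟨q, hq⟩ hxC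
    exact hq x q.end_mem_support hxC
  · have hsub : ∀ x ∈ compOf G C v, ∀ {q : G.Walk v x}, (∀ y ∈ q.support, y ∉ C) →
        ∀ y ∈ q.support, y ∈ compOf G C v := by
      rintro x ⟨q0, hq0⟩ q hq y hy
      exact ⟨q.takeUntil y hy, fun z hz => hq z (Walk.support_takeUntil_subset _ _ hz)⟩
    rw [connected_iff]
    refine ⟨?_, ⟨⟨v, mem_compOf_self hv⟩⟩⟩
    rintro ⟨a, ha⟩ ⟨b, hb⟩
    obtain ⟨qa, hqa⟩ := ha
    obtain ⟨qb, hqb⟩ := hb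
    have ra := reachable_of_walk_in_set qa (hsub a ⟨qa, hqa⟩ hqa) (mem_compOf_self hv) ⟨qa, hqa⟩
    have rb := reachable_of_walk_in_set qb (hsub b ⟨qb, hqb⟩ hqb) (mem_compOf_self hv) ⟨qb, hqb⟩
    exact ra.symm.trans rb
  · rintro u ⟨q, hq⟩ w hadj hw
    refine ⟨q.append (Walk.cons hadj Walk.nil), ?_⟩
    intro y hy
    rw [Walk.mem_support_append_iff] at hy
    rcases hy with hy | hy
    · exact hq y hy
    · have : y = u ∨ y = w := by simpa using hy
      rcases this with rfl | rfl
      · exact hq y q.end_mem_support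
      · exact hw

lemma comp_closed_walk {C D : Set V} (hD : IsCompOfDel G C D) :
    ∀ {a x : V}, a ∈ D → ∀ (q : G.Walk a x), (∀ y ∈ q.support, y ∉ C) → x ∈ D := by
  intro a x ha q
  induction q with
  | nil => intro _; exact ha
  | cons hadj p ih =>
    rename_i u b c
    intro hsup
    have hb : b ∉ C := hsup b (by rw [Walk.support_cons]; exact List.mem_cons_of_mem _ p.start_mem_support)
    have hbD : b ∈ D := hD.2.2 u ha b hadj hb
    exact ih hbD (fun y hy => hsup y (by rw [Walk.support_cons]; exact List.mem_cons_of_mem _ hy))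

lemma comp_unique {C D D' : Set V} (h1 : IsCompOfDel G C D) (h2 : IsCompOfDel G C D')
    {v : V} (hv : v ∈ D) (hv' : v ∈ D') : D = D' := by
  have key : ∀ {E E' : Set V}, IsCompOfDel G C E → IsCompOfDel G C E' → v ∈ E → v ∈ E' →
      E ⊆ E' := by
    intro E E' hE hE' hvE hvE' x hx
    obtain ⟨q, hq⟩ := connected_walk_in_set hE.2.1 hvE hx
    exact comp_closed_walk hE' hvE' q (fun y hy => (Set.disjoint_left.mp hE.1) (hq y hy))
  exact Set.Subset.antisymm (key h1 h2 hv hv') (key h2 h1 hv' hv)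

end GraphAux

section TDAux
variable {V : Type*} {ι : Type*} [DecidableEq ι] {G : SimpleGraph V} {T : SimpleGraph ι}
  {W : ι → Set V}

lemma mem_bag (hTD : IsTreeDecomp G T W) (u : V) : ∃ x, u ∈ W x := by
  have := (hTD.bagsConnected u).nonempty
  exact ⟨this.some.1, this.some.2⟩

lemma bag_path_closed (hTD : IsTreeDecomp G T W) {v : V} {z0 z1 : ι}
    (h0 : v ∈ W z0) (h1 : v ∈ W z1) :
    ∀ y ∈ (pa hTD.isTree z0 z1).support, v ∈ W y := by
  obtain ⟨q, hq⟩ := connected_walk_in_set (hTD.bagsConnected v) (u := z0) (v := z1) h0 h1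
  intro y hy
  exact hq y (pa_support_subset hTD.isTree q hy)

lemma exists_bag_on_path (hTD : IsTreeDecomp G T W) {t1 t2 t : ι}
    (ht : t ∈ (pa hTD.isTree t1 t2).support) {u1 u2 : V} (h1 : u1 ∈ W t1) (h2 : u2 ∈ W t2)
    (q : G.Walk u1 u2) : ∃ v ∈ q.support, v ∈ W t := by
  set hT := hTD.isTree
  by_contra hcon
  push_neg at hcon
  have ht1 : t ≠ t1 := fun h => hcon u1 q.start_mem_support (h ▸ h1)
  have aux : ∀ (x y : V) (q' : G.Walk x y), (∀ v ∈ q'.support, v ∉ W t) →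
      ∀ z0, x ∈ W z0 → t ∉ (pa hT t1 z0).support →
      ∀ z2, y ∈ W z2 → t ∉ (pa hT t1 z2).support := by
    intro x y q'
    induction q' with
    | nil =>
      rename_i a
      intro hq z0 hx hz0 z2 hz2 hmem
      rcases supp_union hT (b := z0) hmem with h | h
      · exact hz0 h
      · exact hq a (Walk.start_mem_support _) (bag_path_closed hTD hx hz2 t h)
    | cons hadj p ih =>
      rename_i x' b c
      intro hq z0 hx hz0 z2 hz2
      obtain ⟨z1, hxz1, hyz1⟩ := hTD.edgeInBag hadj
      have hz1 : t ∉ (pa hT t1 z1).support := by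
        intro hmem
        rcases supp_union hT (b := z0) hmem with h | h
        · exact hz0 h
        · exact hq x' (Walk.start_mem_support _) (bag_path_closed hTD hx hxz1 t h)
      exact ih (fun v hv => hq v (by rw [Walk.support_cons]; exact List.mem_cons_of_mem _ hv))
        z1 hyz1 hz1 z2 hz2
  refine aux u1 u2 q hcon t1 h1 ?_ t2 h2 ht
  rw [support_pa_self]
  simpa using ht1

lemma mem_lcaClosure_iff (hT : T.IsTree) {r : ι} {Y : Set ι} {x : ι} :
    x ∈ lcaClosure T r Y ↔ ∃ u ∈ Y, ∃ w ∈ Y, x = lcaF hT r u w := by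
  constructor
  · rintro ⟨u, hu, w, hw, h⟩
    exact ⟨u, hu, w, hw, (isLCA_iff hT r x u w).mp h⟩
  · rintro ⟨u, hu, w, hw, h⟩
    exact ⟨u, hu, w, hw, (isLCA_iff hT r x u w).mpr h⟩

lemma closure_card [Finite ι] (hT : T.IsTree) (r : ι) :
    ∀ s : Finset ι, s.Nonempty → (lcaClosure T r ↑s).ncard ≤ 2 * s.card - 1 := by
  intro s hs
  induction hs using Finset.Nonempty.cons_induction with
  | singleton a =>
    have : lcaClosure T r (↑({a} : Finset ι)) = {a} := by
      ext x
      rw [Finset.coe_singleton, mem_lcaClosure_iff hT]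
      constructor
      · rintro ⟨u, hu, w, hw, rfl⟩
        rw [Set.mem_singleton_iff] at hu hw
        subst hu; subst hw
        rw [lcaF_self]; rfl
      · rintro rfl
        exact ⟨x, rfl, x, rfl, (lcaF_self hT r x).symm⟩
    rw [this]
    simp
  | cons a s ha hs ih =>
    -- the maximal lca of a with elements of s
    have hlne : (s.toList.map (fun u => lcaF hT r a u)) ≠ [] := by
      simp only [ne_eq, List.map_eq_nil_iff, Finset.toList_eq_nil]
      exact hs.ne_empty
    obtain ⟨zs, hzsl, hPzs, hmax⟩ := exists_rel_min (fun z => anc hT r z a)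
      (fun x y => anc hT r y x)
      (fun x y hx hy => anc_total hT hy hx)
      (fun x y z _ _ _ h1 h2 => anc_trans hT h2 h1)
      (s.toList.map (fun u => lcaF hT r a u))
      (by
        obtain ⟨u, hu⟩ := hs
        exact ⟨lcaF hT r a u, List.mem_map.mpr ⟨u, (Finset.mem_toList).mpr hu, rfl⟩,
          lca_anc_left hT r a u⟩)
    obtain ⟨w', hw'l, hw'⟩ := List.mem_map.mp hzsl
    rw [Finset.mem_toList] at hw'l
    have hsubset : lcaClosure T r ↑(s.cons a ha) ⊆ lcaClosure T r ↑s ∪ {a, zs} := by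
      intro x hx
      rw [mem_lcaClosure_iff hT] at hx
      obtain ⟨u, hu, w, hw, rfl⟩ := hx
      rw [Finset.coe_cons, Set.mem_insert_iff] at hu hw
      have main : ∀ w ∈ s, lcaF hT r a w ∈ lcaClosure T r ↑s ∪ {a, zs} := by
        intro w hws
        set z := lcaF hT r a w with hz
        by_cases hzz : z = zs
        · right; rw [hzz]; exact Set.mem_insert_of_mem _ rfl
        · left
          rw [mem_lcaClosure_iff hT]
          refine ⟨w, hws, w', hw'l, ?_⟩
          have hzzs : anc hT r z zs := hmax z
            (List.mem_map.mpr ⟨w, Finset.mem_toList.mpr hws, rfl⟩) (lca_anc_left hT r a w)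
          refine lcaF_eq_of hT (lca_anc_right hT r a w) ?_ ?_
          · exact anc_trans hT hzzs (hw' ▸ lca_anc_right hT r a w')
          · intro y hyw hyw'
            rcases anc_total hT hyw' (hw' ▸ lca_anc_right hT r a w') with hy | hy
            · have hya : anc hT r y a := anc_trans hT hy (hw' ▸ lca_anc_left hT r a w')
              exact lca_max hT hya hyw
            · exfalso
              apply hzz
              refine anc_antisymm hT hzzs ?_
              have hzsw : anc hT r zs w := anc_trans hT hy hyw
              have hzsa : anc hT r zs a := hw' ▸ lca_anc_left hT r a w'
              exact lca_max hT hzsa hzsw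
      rcases hu with rfl | hu
      · rcases hw with rfl | hw
        · right; rw [lcaF_self hT r]; exact Set.mem_insert _ _
        · exact main _ hw
      · rcases hw with rfl | hw
        · rw [lcaF_comm hT r]; exact main u hu
        · left
          rw [mem_lcaClosure_iff hT]
          exact ⟨u, hu, w, hw, rfl⟩
    have hcard := Set.ncard_le_ncard hsubset (Set.toFinite _)
    have hcard2 := Set.ncard_union_le (lcaClosure T r ↑s) ({a, zs} : Set ι)
    have hpair : ({a, zs} : Set ι).ncard ≤ 2 := by
      have := Set.ncard_insert_le a ({zs} : Set ι)
      simpa using this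
    have hs1 : 1 ≤ s.card := Finset.card_pos.mpr hs
    have := ih
    rw [Finset.card_cons]
    omega

end TDAux

end StmtAux


/- STATEMENT 8: the union `Z` of the bags indexed by the LCA closure of a set `X` of `m`
tree vertices is a union of at most `2m-1` bags, every component of `G - Z` has its
neighborhood inside the union of at most two bags, and if the decomposition is natural,
the neighborhood of such a component `C` meets at most two components of `G - V(C)`. -/
open StmtAux in
/-- the union `Z` of the bags indexed by the LCA closure of a set `X` of `m`
tree vertices is a union of at most `2m-1` bags, every component of `G - Z` has its
neighborhood inside the union of at most two bags, and if the decomposition is natural,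
the neighborhood of such a component `C` meets at most two components of `G - V(C)`. -/
theorem lca_closure_bags {V : Type} [Fintype V] {ι : Type} [Fintype ι]
    (m : ℕ) (hm : 0 < m) (G : SimpleGraph V) (T : SimpleGraph ι) (W : ι → Set V)
    (hTD : IsTreeDecomp G T W) (r : ι) (X : Set ι) (hX : X.ncard = m) :
    (∃ s : Set ι, s.ncard ≤ 2 * m - 1 ∧
        (⋃ x ∈ lcaClosure T r X, W x) = ⋃ x ∈ s, W x) ∧
      (∀ C : Set V, IsCompOfDel G (⋃ x ∈ lcaClosure T r X, W x) C →
        ∃ x y : ι, nbhdSet G C ⊆ W x ∪ W y) ∧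
      (IsNaturalTD G T W →
        ∀ C : Set V, IsCompOfDel G (⋃ x ∈ lcaClosure T r X, W x) C →
          ∃ D₁ D₂ : Set V, ∀ D : Set V, IsCompOfDel G C D →
            (nbhdSet G C ∩ D).Nonempty → D = D₁ ∨ D = D₂) := by
  classical
  have hT := hTD.isTree
  set S := lcaClosure T r X with hSdef
  set Z := ⋃ x ∈ S, W x with hZdef
  -- PART 1
  have part1 : ∃ s : Set ι, s.ncard ≤ 2 * m - 1 ∧ Z = ⋃ x ∈ s, W x := by
    refine ⟨S, ?_, rfl⟩
    have hXfin : X.Finite := Set.toFinite X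
    have hXne : hXfin.toFinset.Nonempty := by
      rw [Set.Finite.toFinset_nonempty]
      apply Set.nonempty_of_ncard_ne_zero
      omega
    have h := closure_card hT r hXfin.toFinset hXne
    rw [Set.Finite.coe_toFinset] at h
    rwa [← Set.ncard_eq_toFinset_card X hXfin, hX] at h
  -- S is closed under lca
  have hSclosed : ∀ s1 ∈ S, ∀ s2 ∈ S, lcaF hT r s1 s2 ∈ S := by
    intro s1 hs1 s2 hs2
    rw [hSdef, mem_lcaClosure_iff hT] at hs1 hs2 ⊢
    obtain ⟨u1, hu1, u2, hu2, rfl⟩ := hs1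
    obtain ⟨u3, hu3, u4, hu4, rfl⟩ := hs2
    rcases lcaF_lcaF hT r u1 u2 (lcaF hT r u3 u4) with h | h
    · rw [h, lcaF_comm hT r]
      rcases lcaF_lcaF hT r u3 u4 u1 with h' | h'
      · rw [h']; exact ⟨u3, hu3, u1, hu1, rfl⟩
      · rw [h']; exact ⟨u3, hu3, u4, hu4, rfl⟩
    · rw [h]; exact ⟨u1, hu1, u2, hu2, rfl⟩
  -- master statement for a single component
  have master : ∀ C : Set V, IsCompOfDel G Z C →
      (∃ x y : ι, nbhdSet G C ⊆ W x ∪ W y) ∧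
      (IsNaturalTD G T W →
        ∃ D₁ D₂ : Set V, ∀ D : Set V, IsCompOfDel G C D →
          (nbhdSet G C ∩ D).Nonempty → D = D₁ ∨ D = D₂) := by
    intro C hC
    have hCne : C.Nonempty := connected_set_nonempty hC.2.1
    set U : Set ι := {t : ι | ∃ u ∈ C, u ∈ W t} with hUdef
    have hUS : ∀ t ∈ U, t ∉ S := by
      rintro t ⟨u, huC, huW⟩ htS
      exact (Set.disjoint_left.mp hC.1 huC) (Set.mem_biUnion htS huW)
    have hUcl : ∀ t1 ∈ U, ∀ t2 ∈ U, ∀ z ∈ (pa hT t1 t2).support, z ∈ U := by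
      rintro t1 ⟨u1, hu1C, hu1W⟩ t2 ⟨u2, hu2C, hu2W⟩ z hz
      obtain ⟨q, hq⟩ := connected_walk_in_set hC.2.1 hu1C hu2C
      obtain ⟨v, hvq, hvW⟩ := exists_bag_on_path hTD hz hu1W hu2W q
      exact ⟨v, hq v hvq, hvW⟩
    set K : Set ι := {z : ι | ∃ t0 ∈ U, ∀ y ∈ (pa hT t0 z).support, y ∉ S} with hKdef
    have hUK : U ⊆ K := by
      intro t ht
      refine ⟨t, ht, ?_⟩
      intro y hy
      rw [support_pa_self] at hy
      have : y = t := by simpa using hy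
      subst this
      exact hUS y ht
    have hKS : ∀ z ∈ K, z ∉ S := by
      rintro z ⟨t0, _, h⟩
      exact h z (Walk.end_mem_support _)
    have hKcl : ∀ k1 ∈ K, ∀ k2 ∈ K, ∀ z ∈ (pa hT k1 k2).support, z ∈ K := by
      rintro k1 ⟨t1, ht1, h1⟩ k2 ⟨t2, ht2, h2⟩ z hz
      refine ⟨t1, ht1, ?_⟩
      intro y hy hyS
      rcases supp_union hT (b := k1) hy with h | h
      · exact h1 y h hyS
      · have hyk1k2 : y ∈ (pa hT k1 k2).support := anc_trans hT h hz
        rcases supp_union hT (b := t1) hyk1k2 with h' | h'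
        · exact h1 y (mem_pa_symm hT h') hyS
        · rcases supp_union hT (b := t2) h' with h'' | h''
          · exact hUS y (hUcl t1 ht1 t2 ht2 y h'') hyS
          · exact h2 y h'' hyS
    have hNCZ : ∀ w ∈ nbhdSet G C, w ∈ Z := by
      rintro w ⟨hwC, u, huC, hadj⟩
      by_contra h
      exact hwC (hC.2.2 u huC w hadj h)
    -- key: each neighbour of C lies in the bag of a boundary vertex
    have keyw : ∀ w ∈ nbhdSet G C, ∃ t k, t ∈ S ∧ k ∈ K ∧ T.Adj k t ∧ w ∈ W t := by
      intro w hw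
      obtain ⟨hwC, u, huC, hadj⟩ := hw
      have hwZ : w ∈ Z := hNCZ w ⟨hwC, u, huC, hadj⟩
      rw [hZdef, Set.mem_iUnion₂] at hwZ
      obtain ⟨s0, hs0S, hws0⟩ := hwZ
      obtain ⟨t0, hut0, hwt0⟩ := hTD.edgeInBag hadj
      have ht0U : t0 ∈ U := ⟨u, huC, hut0⟩
      have hbag : ∀ y ∈ (pa hT t0 s0).support, w ∈ W y := bag_path_closed hTD hwt0 hws0
      obtain ⟨b, hbl, hPb, hmin⟩ := exists_rel_min (fun z => z ∈ S ∧ anc hT t0 z s0)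
        (fun x y => anc hT t0 x y)
        (fun x y hx hy => anc_total hT hx.2 hy.2)
        (fun x y z _ _ _ h1 h2 => anc_trans hT h1 h2)
        ((pa hT t0 s0).support)
        ⟨s0, Walk.end_mem_support _, hs0S, anc_refl hT t0 s0⟩
      have hfirst : ∀ z, anc hT t0 z b → z ∈ S → z = b := by
        intro z hzb hzS
        have hzs0 : anc hT t0 z s0 := anc_trans hT hzb hbl
        exact anc_antisymm hT hzb (hmin z hzs0 ⟨hzS, hzs0⟩)
      have ht0b : t0 ≠ b := fun h => hUS t0 ht0U (h ▸ hPb.1)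
      obtain ⟨k, hkb, hsub, hbk⟩ := penult hT ht0b
      refine ⟨b, k, hPb.1, ⟨t0, ht0U, ?_⟩, hkb, hbag b hbl⟩
      intro y hy hyS
      have : y = b := hfirst y (hsub y hy) hyS
      subst this
      exact hbk hy
    set Btop : Set (ι × ι) := {p | p.1 ∈ S ∧ p.2 ∈ K ∧ T.Adj p.2 p.1 ∧ anc hT r p.1 p.2}
      with hBtopdef
    set Bbot : Set (ι × ι) := {p | p.1 ∈ S ∧ p.2 ∈ K ∧ T.Adj p.2 p.1 ∧ anc hT r p.2 p.1}
      with hBbotdef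
    have htopu : ∀ p ∈ Btop, ∀ p' ∈ Btop, p = p' := by
      rintro ⟨t, k⟩ ⟨htS, hkK, hadj, hanc⟩ ⟨t', k'⟩ ⟨htS', hkK', hadj', hanc'⟩
      have hstep : ∀ (a b a' b' : ι), a ∈ S → b ∈ K → T.Adj b a → anc hT r a b →
          a' ∈ S → b' ∈ K → T.Adj b' a' → anc hT r a' b' → anc hT r a' a := by
        intro a b a' b' haS hbK hab hanc1 haS' hbK' hab' hanc2
        have h1 : a' ∈ (pa hT r b').support := hanc2
        rcases supp_union hT (b := b) h1 with h | h
        · rcases anc_adj_step hT r hab.symm hanc1 a' h with rfl | h'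
          · exact absurd haS' (hKS _ hbK)
          · exact h'
        · exact absurd haS' (hKS a' (hKcl b hbK b' hbK' a' h))
      have htt : t = t' :=
        anc_antisymm hT (hstep t' k' t k htS' hkK' hadj' hanc' htS hkK hadj hanc)
          (hstep t k t' k' htS hkK hadj hanc htS' hkK' hadj' hanc')
      subst htt
      have hkk : k = k' := by
        refine child_unique hT hadj.symm hadj'.symm ?_
        intro hmem
        exact (hKS t (hKcl k hkK k' hkK' t hmem)) htS
      rw [hkk]
    have hsupp_edge : ∀ {k t : ι} (h : T.Adj k t), (pa hT t k).support = [t, k] := by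
      intro k t h
      have hpath : (Walk.cons h.symm (Walk.nil : T.Walk k k)).IsPath := by
        rw [Walk.cons_isPath_iff]
        exact ⟨Walk.IsPath.nil, by simp [h.ne']⟩
      rw [← pa_unique hT hpath]
      rfl
    have hbotu : ∀ p ∈ Bbot, ∀ p' ∈ Bbot, p = p' := by
      rintro ⟨t, k⟩ ⟨htS, hkK, hadj, hanc⟩ ⟨t', k'⟩ ⟨htS', hkK', hadj', hanc'⟩
      have haux : ∀ (a b a' b' : ι), a ∈ S → b ∈ K → T.Adj b a → anc hT r b a →
          a' ∈ S → b' ∈ K → T.Adj b' a' → anc hT r b' a' → anc hT r a a' → a ≠ a' → False := by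
        intro a b a' b' haS hbK hab hanc1 haS' hbK' hab' hanc2 haa' hne
        rcases anc_adj_step hT r hab' hanc2 a haa' with h | h
        · exact hne h
        · -- anc r a b'
          have h1 : a ∈ (pa hT r b').support := h
          rcases supp_union hT (b := b) h1 with h2 | h2
          · -- anc r a b and anc r b a
            exact (hKS b hbK) ((anc_antisymm hT h2 hanc1) ▸ haS)
          · exact (hKS a (hKcl b hbK b' hbK' a h2)) haS
      have htt : t = t' := by
        by_contra hne
        have hg : lcaF hT r t t' ∈ S := hSclosed t htS t' htS'
        have hgmem : lcaF hT r t t' ∈ (pa hT t t').support := lca_mem_path hT r t t'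
        set g := lcaF hT r t t' with hgdef
        have hgcases : g = t ∨ g = t' := by
          rcases supp_union hT (b := k) hgmem with h | h
          · rw [hsupp_edge hadj] at h
            rcases (by simpa using h : g = t ∨ g = k) with h' | h'
            · exact Or.inl h'
            · exact absurd hg (h' ▸ hKS k hkK)
          · rcases supp_union hT (b := k') h with h2 | h2
            · exact absurd hg (hKS g (hKcl k hkK k' hkK' g h2))
            · have : g ∈ (pa hT t' k').support := mem_pa_symm hT h2
              rw [hsupp_edge hadj'] at this
              rcases (by simpa using this : g = t' ∨ g = k') with h' | h'
              · exact Or.inr h'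
              · exact absurd hg (h' ▸ hKS k' hkK')
        rcases hgcases with h | h
        · exact haux t k t' k' htS hkK hadj hanc htS' hkK' hadj' hanc'
            (h ▸ lca_anc_right hT r t t') hne
        · exact haux t' k' t k htS' hkK' hadj' hanc' htS hkK hadj hanc
            (h ▸ lca_anc_left hT r t t') (Ne.symm hne)
      subst htt
      have hkk : k = k' := parent_unique hT r hadj hadj' hanc hanc'
      rw [hkk]
    constructor
    · -- PART 2
      refine ⟨(if h : ∃ p, p ∈ Btop then h.choose.1 else r),
        (if h : ∃ p, p ∈ Bbot then h.choose.1 else r), ?_⟩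
      intro w hw
      obtain ⟨t, k, htS, hkK, hadj, hwt⟩ := keyw w hw
      rcases adj_anc_or hT r hadj with hanc | hanc
      · -- anc r k t : bottom
        have hp : (t, k) ∈ Bbot := ⟨htS, hkK, hadj, hanc⟩
        have hex : ∃ p, p ∈ Bbot := ⟨_, hp⟩
        rw [dif_pos hex]
        right
        have : hex.choose = (t, k) := hbotu _ hex.choose_spec _ hp
        rw [this]
        exact hwt
      · -- anc r t k : top
        have hp : (t, k) ∈ Btop := ⟨htS, hkK, hadj, hanc⟩
        have hex : ∃ p, p ∈ Btop := ⟨_, hp⟩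
        rw [dif_pos hex]
        left
        have : hex.choose = (t, k) := htopu _ hex.choose_spec _ hp
        rw [this]
        exact hwt
    · -- PART 3
      intro hNat
      set Y : ι × ι → Set V := fun p => ⋃ z ∈ sideVerts T p.1 p.2, W z with hYdef
      have hYC : ∀ (p : ι × ι), p.1 ∈ S → p.2 ∈ K → ∀ v ∈ Y p, v ∉ C := by
        rintro ⟨t, k⟩ htS hkK v hv hvC
        rw [hYdef, Set.mem_iUnion₂] at hv
        obtain ⟨z, hzside, hvz⟩ := hv
        have hzU : z ∈ U := ⟨v, hvC, hvz⟩
        have htmem : t ∈ (pa hT z k).support := hzside (pa hT z k)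
        exact (hKS t (hKcl z (hUK hzU) k hkK t htmem)) htS
      set pt : ι × ι → V := fun p => if h : (Y p).Nonempty then h.choose else hCne.choose
        with hptdef
      have hptY : ∀ (p : ι × ι), T.Adj p.1 p.2 → pt p ∈ Y p := by
        rintro ⟨t, k⟩ hadj
        have hcon : (G.induce (Y (t, k))).Connected := hNat t k hadj
        have hne : (Y (t, k)).Nonempty := connected_set_nonempty hcon
        rw [hptdef]
        simp only [dif_pos hne]
        exact hne.choose_spec
      -- the generic component argument
      have hcomp : ∀ (p : ι × ι), p.1 ∈ S → p.2 ∈ K → T.Adj p.2 p.1 →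
          ∀ D : Set V, IsCompOfDel G C D → ∀ w, w ∈ W p.1 → w ∈ D →
          D = compOf G C (pt p) := by
        rintro ⟨t, k⟩ htS hkK hadj D hD w hwt hwD
        have hadj' : T.Adj t k := hadj.symm
        have hcon : (G.induce (Y (t, k))).Connected := hNat t k hadj'
        have hwY : w ∈ Y (t, k) := by
          rw [hYdef, Set.mem_iUnion₂]
          refine ⟨t, ?_, hwt⟩
          intro q
          exact q.start_mem_support
        have hptY' := hptY (t, k) hadj'
        have hptC : pt (t, k) ∉ C := hYC (t, k) htS hkK _ hptY'
        obtain ⟨q, hq⟩ := connected_walk_in_set hcon hptY' hwY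
        have hwcomp : w ∈ compOf G C (pt (t, k)) :=
          ⟨q, fun y hy => hYC (t, k) htS hkK y (hq y hy)⟩
        exact comp_unique hD (compOf_isComp hptC) hwD hwcomp
      refine ⟨(if h : ∃ p, p ∈ Btop then compOf G C (pt h.choose) else ∅),
        (if h : ∃ p, p ∈ Bbot then compOf G C (pt h.choose) else ∅), ?_⟩
      rintro D hD ⟨w, hwN, hwD⟩
      obtain ⟨t, k, htS, hkK, hadj, hwt⟩ := keyw w hwN
      rcases adj_anc_or hT r hadj with hanc | hanc
      · -- bottom
        have hp : (t, k) ∈ Bbot := ⟨htS, hkK, hadj, hanc⟩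
        have hex : ∃ p, p ∈ Bbot := ⟨_, hp⟩
        rw [dif_pos hex]
        right
        have hch : hex.choose = (t, k) := hbotu _ hex.choose_spec _ hp
        rw [hch]
        exact hcomp (t, k) htS hkK hadj D hD w hwt hwD
      · -- top
        have hp : (t, k) ∈ Btop := ⟨htS, hkK, hadj, hanc⟩
        have hex : ∃ p, p ∈ Btop := ⟨_, hp⟩
        rw [dif_pos hex]
        left
        have hch : hex.choose = (t, k) := htopu _ hex.choose_spec _ hp
        rw [hch]
        exact hcomp (t, k) htS hkK hadj D hD w hwt hwD
  exact ⟨part1, fun C hC => (master C hC).1, fun hNat C hC => (master C hC).2 hNat⟩
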